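/- arXiv:0901.1627 — 5 statements merged into one kernel-verified Lean document; each statement's English description precedes it below -/
import Mathlib

section
/- Let E be a Grothendieck topos with the weak factorization system (Mono, Mono^□), where Mono is the class of monomorphisms. A (functorial) cylinder (Cyl, γ, σ) for (Mono, Mono^□) is cartesian if and only if it satisfies condition DH1: the functor Cyl preserves monomorphisms and preserves all colimits. -/
/-!
Common definitions: weak factorization systems, functorial cylinders,
Cisinski's construction, localizers, locally presentable categories.
-/

universe w v u u₁ u₂ u₃

open CategoryTheory Limits Opposite

namespace Paper

variable {K : Type u} [Category.{v} K]

/-- The class of maps with the right lifting property against all maps in `H`. -/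
def Rlp (H : MorphismProperty K) : MorphismProperty K :=
  fun _ _ g => ∀ ⦃A B : K⦄ (h : A ⟶ B), H h → HasLiftingProperty h g

/-- The class of maps with the left lifting property against all maps in `H`. -/
def Llp (H : MorphismProperty K) : MorphismProperty K :=
  fun _ _ f => ∀ ⦃A B : K⦄ (h : A ⟶ B), H h → HasLiftingProperty f h

/-- Weak factorization system. -/
structure IsWFS (L R : MorphismProperty K) : Prop where
  llp_eq : L = Llp R
  rlp_eq : R = Rlp L
  factor : ∀ ⦃X Y : K⦄ (f : X ⟶ Y),
    ∃ (Z : K) (l : X ⟶ Z) (r : Z ⟶ Y), L l ∧ R r ∧ l ≫ r = f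

/-- A class of maps is essentially a (small) set. -/
def IsSmallClass (I : MorphismProperty K) : Prop :=
  Small.{v} (Σ (X : K) (Y : K), { f : X ⟶ Y // I f })

/-- Every object is cofibrant. -/
def AllCofibrant [HasInitial K] (L : MorphismProperty K) : Prop :=
  ∀ X : K, L (initial.to X)

/-- `L` is cofibrantly generated (by a set). -/
def CofGenerated (L : MorphismProperty K) : Prop :=
  ∃ I : MorphismProperty K, IsSmallClass I ∧ L = Llp (Rlp I)

/-- intersection of two classes of maps -/
def interClass (A B : MorphismProperty K) : MorphismProperty K := fun _ _ f => A f ∧ B f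

/-- closed under retracts in the arrow category -/
def RetractClosed (W : MorphismProperty K) : Prop :=
  ∀ ⦃f g : Arrow K⦄ (i : f ⟶ g) (r : g ⟶ f), i ≫ r = 𝟙 f → W g.hom → W f.hom

/-- the 2-out-of-3 property -/
def TwoOutOfThree (W : MorphismProperty K) : Prop :=
  (∀ ⦃X Y Z : K⦄ (f : X ⟶ Y) (g : Y ⟶ Z), W f → W g → W (f ≫ g)) ∧
  (∀ ⦃X Y Z : K⦄ (f : X ⟶ Y) (g : Y ⟶ Z), W f → W (f ≫ g) → W g) ∧
  (∀ ⦃X Y Z : K⦄ (f : X ⟶ Y) (g : Y ⟶ Z), W g → W (f ≫ g) → W f)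

/-- Quillen model structure, given by cofibrations, weak equivalences and fibrations. -/
structure IsModelStructure (Cof W Fib : MorphismProperty K) : Prop where
  retractClosed : RetractClosed W
  twoOutOfThree : TwoOutOfThree W
  wfs₁ : IsWFS Cof (interClass W Fib)
  wfs₂ : IsWFS (interClass Cof W) Fib

/-- the functor `X ↦ X + X` -/
@[simps] noncomputable def double (K : Type u) [Category.{v} K] [HasBinaryCoproducts K] :
    K ⥤ K where
  obj X := X ⨿ X
  map f := coprod.map f f

/-- A functorial cylinder: a functor `C` together with natural transformations
`γ : X + X ⟶ C X` and `σ : C X ⟶ X` factoring the codiagonal. -/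
structure Cylinder (K : Type u) [Category.{v} K] [HasBinaryCoproducts K] where
  C : K ⥤ K
  γ : double K ⟶ C
  σ : C ⟶ 𝟭 K
  fac : ∀ X : K, γ.app X ≫ σ.app X = coprod.desc (𝟙 X) (𝟙 X)

namespace Cylinder
variable [HasBinaryCoproducts K] (cyl : Cylinder K)

/-- `γ⁰` -/
noncomputable def γ₀ : 𝟭 K ⟶ cyl.C where
  app X := coprod.inl ≫ cyl.γ.app X
  naturality X Y f := by
    have h := cyl.γ.naturality f
    dsimp [double] at h ⊢
    rw [Category.assoc, ← h, ← Category.assoc, ← Category.assoc, coprod.inl_map]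

/-- `γ¹` -/
noncomputable def γ₁ : 𝟭 K ⟶ cyl.C where
  app X := coprod.inr ≫ cyl.γ.app X
  naturality X Y f := by
    have h := cyl.γ.naturality f
    dsimp [double] at h ⊢
    rw [Category.assoc, ← h, ← Category.assoc, ← Category.assoc, coprod.inr_map]

/-- `(Cyl, γ, σ)` is a cylinder for a weak factorization system whose left class is `L`
if each `γ_X` lies in `L`. -/
def IsCylinderFor (L : MorphismProperty K) : Prop := ∀ X : K, L (cyl.γ.app X)

/-- the cylinder is final if each `σ_X` lies in `R`. -/
def IsFinal (R : MorphismProperty K) : Prop := ∀ X : K, R (cyl.σ.app X)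

end Cylinder

section Star
variable [HasPushouts K] {F F' : K ⥤ K}

/-- `f ⋆ α`: the induced map from the pushout of `F f` along `α_X` to `F' Y`. -/
noncomputable def starMap (α : F ⟶ F') {X Y : K} (f : X ⟶ Y) :
    pushout (F.map f) (α.app X) ⟶ F'.obj Y :=
  pushout.desc (α.app Y) (F'.map f) (α.naturality f)

/-- the class `L` is stable under `(−) ⋆ α`. -/
def StableUnderStar (L : MorphismProperty K) (α : F ⟶ F') : Prop :=
  ∀ ⦃X Y : K⦄ (f : X ⟶ Y), L f → L (starMap α f)

/-- the class `I ⋆ α = { f ⋆ α | f ∈ I }`. -/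
def starClass (α : F ⟶ F') (I : MorphismProperty K) : MorphismProperty K :=
  fun _ _ g => ∃ (X Y : K) (f : X ⟶ Y), I f ∧ Arrow.mk g = Arrow.mk (starMap α f)

end Star

/-- the cylinder is cartesian with respect to the left class `L`:
the cylinder functor is a left adjoint and `L` is stable under `⋆γ`, `⋆γ⁰` and `⋆γ¹`. -/
structure Cylinder.IsCartesian [HasBinaryCoproducts K] [HasPushouts K]
    (cyl : Cylinder K) (L : MorphismProperty K) : Prop where
  leftAdjoint : cyl.C.IsLeftAdjoint
  star_γ : StableUnderStar L cyl.γ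
  star_γ₀ : StableUnderStar L cyl.γ₀
  star_γ₁ : StableUnderStar L cyl.γ₁

section Lambda
variable [HasBinaryCoproducts K] [HasPushouts K]

/-- `Λⁿ(Cyl,S,I)` -/
noncomputable def LambdaN (cyl : Cylinder K) (S I : MorphismProperty K) :
    ℕ → MorphismProperty K
  | 0 => fun _ _ f => S f ∨ starClass cyl.γ₀ I f ∨ starClass cyl.γ₁ I f
  | n + 1 => starClass cyl.γ (LambdaN cyl S I n)

/-- `Λ(Cyl,S,I)` -/
noncomputable def Lambda (cyl : Cylinder K) (S I : MorphismProperty K) :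
    MorphismProperty K :=
  fun _ _ f => ∃ n : ℕ, LambdaN cyl S I n f

/-- `T` is fibrant if `T → 1` has the right lifting property against `Λ(Cyl,S,I)`. -/
noncomputable def Fibrant [HasTerminal K] (cyl : Cylinder K) (S I : MorphismProperty K)
    (T : K) : Prop :=
  Rlp (Lambda cyl S I) (terminal.from T)

end Lambda

/-- `f` and `g` are homotopic: `(f|g)` factors through `γ_X`. -/
def Htp [HasBinaryCoproducts K] (cyl : Cylinder K) {X Y : K} (f g : X ⟶ Y) : Prop :=
  ∃ h : cyl.C.obj X ⟶ Y, cyl.γ.app X ≫ h = coprod.desc f g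

/-- symmetric-transitive closure of a relation -/
inductive STClos {α : Sort*} (r : α → α → Prop) : α → α → Prop
  | base : ∀ {x y : α}, r x y → STClos r x y
  | symm : ∀ {x y : α}, STClos r x y → STClos r y x
  | trans : ∀ {x y z : α}, STClos r x y → STClos r y z → STClos r x z

/-- the homotopy equivalence relation `∼`, the symmetric-transitive closure of `≃`. -/
def HtpEq [HasBinaryCoproducts K] (cyl : Cylinder K) {X Y : K} : (X ⟶ Y) → (X ⟶ Y) → Prop :=
  STClos (Htp cyl)

/-- `W(Cyl,S,I)`: the maps `f : X ⟶ Y` such that for every fibrant `T` the induced map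
`Hom(Y,T)/∼ → Hom(X,T)/∼` is bijective (expressed elementwise). -/
noncomputable def Weq [HasBinaryCoproducts K] [HasPushouts K] [HasTerminal K]
    (cyl : Cylinder K) (S I : MorphismProperty K) : MorphismProperty K :=
  fun X Y f => ∀ T : K, Fibrant cyl S I T →
    (∀ t : X ⟶ T, ∃ u : Y ⟶ T, HtpEq cyl (f ≫ u) t) ∧
    (∀ u v : Y ⟶ T, HtpEq cyl (f ≫ u) (f ≫ v) → HtpEq cyl u v)

/-- pushout stability of a class of maps -/
def StableUnderPushout (L : MorphismProperty K) : Prop :=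
  ∀ ⦃A B A' B' : K⦄ ⦃f : A ⟶ B⦄ ⦃g : A ⟶ A'⦄ ⦃f' : A' ⟶ B'⦄ ⦃g' : B ⟶ B'⦄,
    IsPushout g f f' g' → L f → L f'

/-- closure under transfinite composition of smooth (colimit preserving) chains -/
def ClosedUnderTransfiniteComposition (L : MorphismProperty K) : Prop :=
  ∀ (o : Ordinal.{v}) (ho : (0 : Ordinal.{v}) < o)
    (D : (Set.Iio o : Set Ordinal.{v}) ⥤ K),
    Nonempty (PreservesColimits D) →
    (∀ (β : Ordinal.{v}) (hβ : β + 1 < o),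
      L (D.map (homOfLE (Subtype.mk_le_mk.mpr (le_self_add : β ≤ β + 1)) :
        (⟨β, lt_of_le_of_lt (le_self_add : β ≤ β + 1) hβ⟩ : (Set.Iio o : Set Ordinal.{v})) ⟶
        ⟨β + 1, hβ⟩))) →
    ∀ (c : Cocone D), IsColimit c → L (c.ι.app ⟨0, ho⟩)

/-- A localizer for the class `Cof`: a class `W` with the 2-out-of-3 property, containing
`Cof^□`, and whose intersection with `Cof` is closed under pushouts and transfinite
compositions. -/
structure IsLocalizer (Cof W : MorphismProperty K) : Prop where
  twoOutOfThree : TwoOutOfThree W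
  rlp_le : ∀ ⦃X Y : K⦄ (f : X ⟶ Y), Rlp Cof f → W f
  pushout : StableUnderPushout (interClass Cof W)
  transfinite : ClosedUnderTransfiniteComposition (interClass Cof W)

/-- `W(S)`: the smallest localizer for `Cof` containing `S` (the intersection of all of them). -/
def smallestLocalizer (Cof S : MorphismProperty K) : MorphismProperty K :=
  fun _ _ f => ∀ W : MorphismProperty K, IsLocalizer Cof W →
    (∀ ⦃A B : K⦄ (s : A ⟶ B), S s → W s) → W f

/-- the smallest class containing `S` which is a localizer for `Cof` and moreover closed
under retracts in the arrow category. -/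
def smallestRetractLocalizer (Cof S : MorphismProperty K) : MorphismProperty K :=
  fun _ _ f => ∀ W : MorphismProperty K, IsLocalizer Cof W → RetractClosed W →
    (∀ ⦃A B : K⦄ (s : A ⟶ B), S s → W s) → W f

/-- the empty class of maps -/
def emptyClass (K : Type u) [Category.{v} K] : MorphismProperty K := fun _ _ _ => False

/-- a preorder is `κ`-directed if every subset of cardinality `< κ` has an upper bound -/
def IsCardinalDirected (κ : Cardinal.{v}) (J : Type v) [Preorder J] : Prop :=
  ∀ S : Set J, Cardinal.mk S < κ → ∃ j : J, ∀ s ∈ S, s ≤ j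

/-- an object `X` is `κ`-presentable if `Hom(X,-)` preserves `κ`-directed colimits -/
def IsPresentableObj (κ : Cardinal.{v}) (X : K) : Prop :=
  ∀ (J : Type v) [Preorder J], IsCardinalDirected κ J →
    Nonempty (PreservesColimitsOfShape J (coyoneda.obj (op X)))

/-- `X` is a `κ`-directed colimit of objects from the set `A` -/
def IsDirectedColimitFrom (κ : Cardinal.{v}) (A : Set K) (X : K) : Prop :=
  ∃ (J : Type v) (pre : Preorder J),
    letI := pre
    IsCardinalDirected κ J ∧
      ∃ (D : J ⥤ K) (c : Cocone D), Nonempty (IsColimit c) ∧ c.pt = X ∧ ∀ j : J, D.obj j ∈ A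

/-- `κ`-accessible category -/
structure IsCardinalAccessible (κ : Cardinal.{v}) (K : Type u) [Category.{v} K] : Prop where
  isRegular : κ.IsRegular
  hasDirectedColimits :
    ∀ (J : Type v) [Preorder J], IsCardinalDirected κ J → HasColimitsOfShape J K
  generators : ∃ A : Set K, Small.{v} A ∧ (∀ X ∈ A, IsPresentableObj κ X) ∧
    ∀ X : K, IsDirectedColimitFrom κ A X

/-- accessible category -/
def IsAccessibleCat (K : Type u) [Category.{v} K] : Prop :=
  ∃ κ : Cardinal.{v}, IsCardinalAccessible κ K

/-- locally presentable category: accessible and cocomplete -/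
def IsLocallyPresentable (K : Type u) [Category.{v} K] : Prop :=
  IsAccessibleCat K ∧ HasColimits K

/-- `F` preserves `κ`-directed colimits -/
def PreservesCardinalDirectedColimits (κ : Cardinal.{v}) {A : Type u₁} [Category.{v} A]
    {C : Type u₂} [Category.{v} C] (F : A ⥤ C) : Prop :=
  ∀ (J : Type v) [Preorder J], IsCardinalDirected κ J →
    Nonempty (PreservesColimitsOfShape J F)

/-- accessible functor -/
def IsAccessibleFunctor {A : Type u₁} [Category.{v} A] {C : Type u₂} [Category.{v} C]
    (F : A ⥤ C) : Prop :=
  ∃ κ : Cardinal.{v}, IsCardinalAccessible κ A ∧ IsCardinalAccessible κ C ∧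
    PreservesCardinalDirectedColimits κ F

/-- dual strong deformation retract -/
def DualStrongDeformationRetract [HasBinaryCoproducts K] (cyl : Cylinder K)
    {X Y : K} (f : X ⟶ Y) : Prop :=
  ∃ (g : Y ⟶ X) (h : cyl.C.obj X ⟶ X),
    g ≫ f = 𝟙 Y ∧ cyl.γ₀.app X ≫ h = 𝟙 X ∧ cyl.γ₁.app X ≫ h = f ≫ g ∧
      h ≫ f = cyl.σ.app X ≫ f

/-- helper instance (Prop-valued): binary coproducts of sheaves of types, found directly
by sheafification; instance search times out on this in current Mathlib. -/
instance sheafHasBinaryCoproductsAux {C : Type v} [SmallCategory C] (J : GrothendieckTopology C) :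
    HasBinaryCoproducts (Sheaf J (Type v)) :=
  ⟨fun _ => HasColimit.mk
    ⟨Sheaf.sheafifyCocone (colimit.cocone _), Sheaf.isColimitSheafifyCocone _ (colimit.isColimit _)⟩⟩

namespace Stmt3Aux

section General
variable {E : Type u} [Category.{v} E]

section CoprodPushout
variable [HasBinaryCoproducts E]

attribute [local simp] coprod.inl_desc coprod.inr_desc

lemma isPushout_coprod_map_left {A B : E} (f : A ⟶ B) (Z : E) :
    IsPushout f (coprod.inl : A ⟶ A ⨿ Z) (coprod.inl : B ⟶ B ⨿ Z) (coprod.map f (𝟙 Z)) := by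
  apply IsPushout.of_isColimit (c := PushoutCocone.mk (coprod.inl : B ⟶ B ⨿ Z)
    (coprod.map f (𝟙 Z)) (by simp))
  refine PushoutCocone.IsColimit.mk _ (fun s => coprod.desc s.inl (coprod.inr ≫ s.inr))
    (fun s => by simp) (fun s => ?_) (fun s m h₁ h₂ => ?_)
  · apply coprod.hom_ext
    · simpa using s.condition
    · simp
  · apply coprod.hom_ext
    · simpa using h₁
    · have := coprod.inr ≫= h₂
      simpa using this

lemma isPushout_coprod_map_right {A B : E} (f : A ⟶ B) (Z : E) :
    IsPushout f (coprod.inr : A ⟶ Z ⨿ A) (coprod.inr : B ⟶ Z ⨿ B) (coprod.map (𝟙 Z) f) := by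
  apply IsPushout.of_isColimit (c := PushoutCocone.mk (coprod.inr : B ⟶ Z ⨿ B)
    (coprod.map (𝟙 Z) f) (by simp))
  refine PushoutCocone.IsColimit.mk _ (fun s => coprod.desc (coprod.inl ≫ s.inr) s.inl)
    (fun s => by simp) (fun s => ?_) (fun s m h₁ h₂ => ?_)
  · apply coprod.hom_ext
    · simp
    · simpa using s.condition
  · apply coprod.hom_ext
    · have := coprod.inl ≫= h₂
      simpa using this
    · simpa using h₁

lemma mono_coprod_map [Adhesive E] {A B X Y : E} (f : A ⟶ B) (g : X ⟶ Y)
    (hf : Mono f) (hg : Mono g) : Mono (coprod.map f g) := by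
  have h1 : Mono (coprod.map f (𝟙 X)) := by
    haveI := hf
    exact Adhesive.mono_of_isPushout_of_mono_left (isPushout_coprod_map_left f X)
  have h2 : Mono (coprod.map (𝟙 B) g) := by
    haveI := hg
    exact Adhesive.mono_of_isPushout_of_mono_left (isPushout_coprod_map_right g B)
  have : coprod.map f g = coprod.map f (𝟙 X) ≫ coprod.map (𝟙 B) g := by
    apply coprod.hom_ext <;> simp
  rw [this]
  exact mono_comp _ _

/-- binary coproducts of pushout squares are pushout squares -/
lemma isPushout_coprod_map {W X Y Z : E} {f : W ⟶ X} {g : W ⟶ Y} {h : X ⟶ Z} {i : Y ⟶ Z}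
    (H : IsPushout f g h i) :
    IsPushout (coprod.map f f) (coprod.map g g) (coprod.map h h) (coprod.map i i) := by
  apply IsPushout.of_isColimit (c := PushoutCocone.mk (coprod.map h h) (coprod.map i i)
    (by apply coprod.hom_ext <;> simp [H.w]))
  refine PushoutCocone.IsColimit.mk _ (fun s => coprod.desc
      (H.desc (coprod.inl ≫ s.inl) (coprod.inl ≫ s.inr) (by
        have := coprod.inl ≫= s.condition
        simpa using this))
      (H.desc (coprod.inr ≫ s.inl) (coprod.inr ≫ s.inr) (by
        have := coprod.inr ≫= s.condition
        simpa using this)))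
    (fun s => ?_) (fun s => ?_) (fun s m h₁ h₂ => ?_)
  · apply coprod.hom_ext <;> simp
  · apply coprod.hom_ext <;> simp
  · apply coprod.hom_ext
    · apply H.hom_ext
      · have := coprod.inl ≫= h₁
        simpa using this
      · have := coprod.inl ≫= h₂
        simpa using this
    · apply H.hom_ext
      · have := coprod.inr ≫= h₁
        simpa using this
      · have := coprod.inr ≫= h₂
        simpa using this

end CoprodPushout


/-- If `F` preserves monos and pushouts, `F'` preserves monos, and `α` is a levelwise mono,
then the naturality square of `α` at a mono is a pullback. -/
lemma isPullback_naturality [Adhesive E] [HasPushouts E] {F F' : E ⥤ E} (α : F ⟶ F')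
    (hF : ∀ ⦃X Y : E⦄ (f : X ⟶ Y), Mono f → Mono (F.map f))
    (hFpo : ∀ ⦃W X Y Z : E⦄ {f : W ⟶ X} {g : W ⟶ Y} {h : X ⟶ Z} {i : Y ⟶ Z},
      IsPushout f g h i → IsPushout (F.map f) (F.map g) (F.map h) (F.map i))
    (hF' : ∀ ⦃X Y : E⦄ (f : X ⟶ Y), Mono f → Mono (F'.map f))
    (hα : ∀ X : E, Mono (α.app X))
    {X Y : E} (f : X ⟶ Y) (hf : Mono f) :
    IsPullback (F.map f) (α.app X) (α.app Y) (F'.map f) := by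
  haveI := hf
  have hpo : IsPushout f f (pushout.inl f f) (pushout.inr f f) := IsPushout.of_hasPushout f f
  have hFq := hFpo hpo
  haveI hFf : Mono (F.map f) := hF f hf
  haveI hF'f : Mono (F'.map f) := hF' f hf
  have hPBF : IsPullback (F.map f) (F.map f) (F.map (pushout.inl f f)) (F.map (pushout.inr f f)) :=
    Adhesive.isPullback_of_isPushout_of_mono_left hFq
  have key : ∀ s : PullbackCone (α.app Y) (F'.map f),
      s.fst ≫ F.map (pushout.inl f f) = s.fst ≫ F.map (pushout.inr f f) := by
    intro s
    haveI := hα (pushout f f)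
    rw [← cancel_mono (α.app (pushout f f))]
    rw [Category.assoc, Category.assoc, α.naturality, α.naturality,
      ← Category.assoc, ← Category.assoc, s.condition, Category.assoc, Category.assoc,
      ← F'.map_comp, ← F'.map_comp, pushout.condition]
  apply IsPullback.of_isLimit (c := PullbackCone.mk (F.map f) (α.app X) (α.naturality f))
  refine PullbackCone.IsLimit.mk _ (fun s => hPBF.lift s.fst s.fst (key s))
    (fun s => hPBF.lift_fst _ _ _) (fun s => ?_) (fun s m h₁ h₂ => ?_)
  · -- lift ≫ α.app X = s.snd
    rw [← cancel_mono (F'.map f), Category.assoc, ← α.naturality, ← Category.assoc,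
      hPBF.lift_fst, s.condition]
  · -- uniqueness
    apply hPBF.hom_ext
    · rw [hPBF.lift_fst]; exact h₁
    · rw [hPBF.lift_snd]; exact h₁


end General

/-- In types: if a commuting square of injections is a pullback, then the map from
any pushout of the square to the common codomain is injective. -/
lemma mono_desc_type {P A B Z : Type v} {p₁ : P ⟶ A} {p₂ : P ⟶ B} {a : A ⟶ Z} {b : B ⟶ Z}
    (hpb : IsPullback p₁ p₂ a b) (ha : Mono a) (hb : Mono b)
    {Q : Type v} {iA : A ⟶ Q} {iB : B ⟶ Q} (hpo : IsPushout p₁ p₂ iA iB)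
    {m : Q ⟶ Z} (hma : iA ≫ m = a) (hmb : iB ≫ m = b) : Mono m := by
  have hainj : Function.Injective a := (CategoryTheory.mono_iff_injective a).mp ha
  have hbinj : Function.Injective b := (CategoryTheory.mono_iff_injective b).mp hb
  have hsurj : ∀ (x : A) (y : B), a x = b y → ∃ p : P, p₁ p = x ∧ p₂ p = y := by
    intro x y hxy
    let ℓ : PUnit.{v+1} ⟶ P := hpb.lift (TypeCat.ofHom fun _ => x) (TypeCat.ofHom fun _ => y) (by ext; exact hxy)
    refine ⟨ℓ PUnit.unit, ?_, ?_⟩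
    · exact ConcreteCategory.congr_hom (hpb.lift_fst (TypeCat.ofHom fun _ => x) (TypeCat.ofHom fun _ => y) (by ext; exact hxy)) PUnit.unit
    · exact ConcreteCategory.congr_hom (hpb.lift_snd (TypeCat.ofHom fun _ => x) (TypeCat.ofHom fun _ => y) (by ext; exact hxy)) PUnit.unit
  -- explicit pushout: the union inside `Z`
  let U : Type v := {z : Z // (∃ x, a x = z) ∨ (∃ y, b y = z)}
  let jA : A ⟶ U := TypeCat.ofHom fun x => ⟨a x, Or.inl ⟨x, rfl⟩⟩
  let jB : B ⟶ U := TypeCat.ofHom fun y => ⟨b y, Or.inr ⟨y, rfl⟩⟩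
  have hcomm : p₁ ≫ jA = p₂ ≫ jB := by
    ext p
    exact ConcreteCategory.congr_hom hpb.w p
  classical
  let d : ∀ s : PushoutCocone p₁ p₂, U ⟶ s.pt := fun s => TypeCat.ofHom fun u =>
    if h : ∃ x, a x = u.1 then s.inl h.choose
    else s.inr (u.2.resolve_left h).choose
  have dA : ∀ (s : PushoutCocone p₁ p₂) (x : A), d s (jA x) = s.inl x := by
    intro s x
    have h : ∃ x', a x' = (jA x).1 := ⟨x, rfl⟩
    simp only [d, TypeCat.ofHom_apply, dif_pos h]
    exact congrArg s.inl (hainj h.choose_spec)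
  have dB : ∀ (s : PushoutCocone p₁ p₂) (y : B), d s (jB y) = s.inr y := by
    intro s y
    by_cases h : ∃ x', a x' = (jB y).1
    · simp only [d, TypeCat.ofHom_apply, dif_pos h]
      obtain ⟨p, hp₁, hp₂⟩ := hsurj h.choose y h.choose_spec
      rw [← hp₁, ← hp₂]
      exact ConcreteCategory.congr_hom s.condition p
    · simp only [d, TypeCat.ofHom_apply, dif_neg h]
      exact congrArg s.inr (hbinj (((jB y).2.resolve_left h).choose_spec))
  have hcolim : IsColimit (PushoutCocone.mk jA jB hcomm) := by
    refine PushoutCocone.IsColimit.mk _ d (fun s => ConcreteCategory.hom_ext _ _ (dA s)) (fun s => ConcreteCategory.hom_ext _ _ (dB s))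
      (fun s m' h₁ h₂ => ConcreteCategory.hom_ext _ _ fun u => ?_)
    rcases u.2 with h | h
    · obtain ⟨x, hx⟩ := h
      have hu : u = jA x := Subtype.ext hx.symm
      rw [hu, dA s x]
      exact ConcreteCategory.congr_hom h₁ x
    · obtain ⟨y, hy⟩ := h
      have hu : u = jB y := Subtype.ext hy.symm
      rw [hu, dB s y]
      exact ConcreteCategory.congr_hom h₂ y
  -- compare `Q` with `U`
  let e : Q ≅ U := hpo.isColimit.coconePointUniqueUpToIso hcolim
  have heA : iA ≫ e.hom = jA :=
    hpo.isColimit.comp_coconePointUniqueUpToIso_hom hcolim WalkingSpan.left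
  have heB : iB ≫ e.hom = jB :=
    hpo.isColimit.comp_coconePointUniqueUpToIso_hom hcolim WalkingSpan.right
  have hm : m = e.hom ≫ (TypeCat.ofHom (Subtype.val : U → Z)) := by
    apply hpo.hom_ext
    · rw [hma, ← Category.assoc, heA]; rfl
    · rw [hmb, ← Category.assoc, heB]; rfl
  rw [hm]
  have : Mono (TypeCat.ofHom (Subtype.val : U → Z)) := (CategoryTheory.mono_iff_injective _).mpr Subtype.val_injective
  exact mono_comp _ _


section SheafAux
variable {C : Type v} [SmallCategory C] {J : GrothendieckTopology C}

/-- The quotient of a sheaf (as a presheaf) by the kernel relation of a morphism. -/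
@[simps] def kerQuot {X Y : Sheaf J (Type v)} (e : X ⟶ Y) : Cᵒᵖ ⥤ Type v where
  obj U := Quot (fun x y : X.val.obj U => e.hom.app U x = e.hom.app U y)
  map {U U'} φ := TypeCat.ofHom (Quot.map (X.val.map φ) (fun x y h => by
    have h₁ := NatTrans.naturality_apply e.hom φ x
    have h₂ := NatTrans.naturality_apply e.hom φ y
    rw [h₁, h₂, h]))
  map_id U := by
    ext q
    induction q using Quot.ind with
    | _ x => exact congrArg (Quot.mk _) (ConcreteCategory.congr_hom (X.val.map_id U) x)
  map_comp {U U' U''} φ ψ := by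
    ext q
    induction q using Quot.ind with
    | _ x => exact congrArg (Quot.mk _) (ConcreteCategory.congr_hom (X.val.map_comp φ ψ) x)

/-- projection to the kernel quotient -/
def kerQuotProj {X Y : Sheaf J (Type v)} (e : X ⟶ Y) : X.val ⟶ kerQuot e where
  app U := TypeCat.ofHom (Quot.mk _)
  naturality U U' φ := rfl

/-- Descend a morphism of sheaves along an epimorphism with smaller kernel. -/
lemma exists_desc_of_ker_le {X Y₁ Y₂ : Sheaf J (Type v)} (e₁ : X ⟶ Y₁) (e₂ : X ⟶ Y₂)
    [Epi e₁]
    (hker : ∀ (U : Cᵒᵖ) (x y : X.val.obj U),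
      e₁.hom.app U x = e₁.hom.app U y → e₂.hom.app U x = e₂.hom.app U y) :
    ∃ φ : Y₁ ⟶ Y₂, e₁ ≫ φ = e₂ := by
  set L := presheafToSheaf J (Type v) with hL
  set adj := sheafificationAdjunction J (Type v) with hadj
  -- the two induced maps out of the kernel quotient
  set bar₁ : kerQuot e₁ ⟶ Y₁.val :=
    { app := fun U => TypeCat.ofHom (Quot.lift (e₁.hom.app U) (fun x y h => h))
      naturality := fun U U' φ => by
        ext q
        induction q using Quot.ind with
        | _ x => exact ConcreteCategory.congr_hom (e₁.hom.naturality φ) x } with hbar₁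
  set bar₂ : kerQuot e₁ ⟶ Y₂.val :=
    { app := fun U => TypeCat.ofHom (Quot.lift (e₂.hom.app U) (fun x y h => hker U x y h))
      naturality := fun U U' φ => by
        ext q
        induction q using Quot.ind with
        | _ x => exact ConcreteCategory.congr_hom (e₂.hom.naturality φ) x } with hbar₂
  have hπ₁ : kerQuotProj e₁ ≫ bar₁ = e₁.hom := rfl
  have hπ₂ : kerQuotProj e₁ ≫ bar₂ = e₂.hom := rfl
  set m₁ : L.obj (kerQuot e₁) ⟶ Y₁ := L.map bar₁ ≫ adj.counit.app Y₁ with hm₁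
  have hnat₁ : L.map e₁.hom ≫ adj.counit.app Y₁ = adj.counit.app X ≫ e₁ :=
    adj.counit.naturality e₁
  have hfac₁ : L.map (kerQuotProj e₁) ≫ m₁ = adj.counit.app X ≫ e₁ := by
    rw [hm₁, ← Category.assoc, ← L.map_comp, hπ₁, hnat₁]
  haveI : Mono bar₁ := by
    rw [NatTrans.mono_iff_mono_app]
    intro U
    rw [CategoryTheory.mono_iff_injective]
    intro q q' h
    induction q using Quot.ind with
    | _ x =>
      induction q' using Quot.ind with
      | _ y => exact Quot.sound h
  haveI : Mono (L.map bar₁) := L.map_mono bar₁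
  haveI : Mono m₁ := mono_comp _ _
  haveI : Epi m₁ := by
    have : Epi (L.map (kerQuotProj e₁) ≫ m₁) := by
      rw [hfac₁]; exact epi_comp _ _
    exact epi_of_epi (L.map (kerQuotProj e₁)) m₁
  haveI : IsIso m₁ := isIso_of_mono_of_epi m₁
  refine ⟨inv m₁ ≫ L.map bar₂ ≫ adj.counit.app Y₂, ?_⟩
  have hnat₂ : L.map e₂.hom ≫ adj.counit.app Y₂ = adj.counit.app X ≫ e₂ :=
    adj.counit.naturality e₂
  rw [← cancel_epi (adj.counit.app X)]
  rw [← Category.assoc, ← hnat₂, ← hπ₂, L.map_comp, ← hfac₁]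
  simp

/-- the kernel relation of a quotient object, as invariant -/
noncomputable def kerClass {Xop : (Sheaf J (Type v))ᵒᵖ} :
    Subobject Xop → ∀ U : Cᵒᵖ, Set (Xop.unop.val.obj U × Xop.unop.val.obj U) :=
  Subobject.lift (fun Aop f _ => fun U =>
    {p | f.unop.hom.app U p.1 = f.unop.hom.app U p.2}) (by
      intro Aop Bop f g hf hg i w
      funext U
      ext p
      have hfe : f.unop.hom = g.unop.hom ≫ i.hom.unop.hom := by
        rw [← w]
        rfl
      haveI : IsIso i.hom.unop := (inferInstance : IsIso i.unop.hom)
      haveI : Mono i.hom.unop.hom := inferInstance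
      have hinj : Function.Injective (i.hom.unop.hom.app U) :=
        (CategoryTheory.mono_iff_injective _).mp
          ((NatTrans.mono_iff_mono_app i.hom.unop.hom).mp inferInstance U)
      simp only [Set.mem_setOf_eq, hfe, NatTrans.comp_app, types_comp_apply]
      exact ⟨fun hh => hinj hh, fun hh => congrArg _ hh⟩)

lemma kerClass_mk {Xop : (Sheaf J (Type v))ᵒᵖ} {Aop : (Sheaf J (Type v))ᵒᵖ}
    (f : Aop ⟶ Xop) [Mono f] :
    kerClass (Subobject.mk f) = fun U =>
      {p | f.unop.hom.app U p.1 = f.unop.hom.app U p.2} :=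
  Subobject.lift_mk _ _

lemma wellPowered_op (J : GrothendieckTopology C) : WellPowered (Sheaf J (Type v))ᵒᵖ := by
  constructor
  intro Xop
  refine small_of_injective (f := kerClass) ?_
  intro P₁ P₂ hP
  rw [← Subobject.mk_arrow P₁, ← Subobject.mk_arrow P₂]
  rw [← Subobject.mk_arrow P₁, ← Subobject.mk_arrow P₂, kerClass_mk, kerClass_mk] at hP
  set e₁ := P₁.arrow.unop with he₁
  set e₂ := P₂.arrow.unop with he₂
  haveI : Epi e₁ := unop_epi_of_mono P₁.arrow
  haveI : Epi e₂ := unop_epi_of_mono P₂.arrow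
  have hker₁₂ : ∀ (U : Cᵒᵖ) (x y : Xop.unop.val.obj U),
      e₁.hom.app U x = e₁.hom.app U y → e₂.hom.app U x = e₂.hom.app U y := by
    intro U x y hxy
    exact (Set.ext_iff.mp (congr_fun hP U) (x, y)).mp hxy
  have hker₂₁ : ∀ (U : Cᵒᵖ) (x y : Xop.unop.val.obj U),
      e₂.hom.app U x = e₂.hom.app U y → e₁.hom.app U x = e₁.hom.app U y := by
    intro U x y hxy
    exact (Set.ext_iff.mp (congr_fun hP U) (x, y)).mpr hxy
  obtain ⟨φ, hφ⟩ := exists_desc_of_ker_le e₁ e₂ hker₁₂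
  obtain ⟨ψ, hψ⟩ := exists_desc_of_ker_le e₂ e₁ hker₂₁
  have hom_inv : φ ≫ ψ = 𝟙 _ := by
    rw [← cancel_epi e₁, ← Category.assoc, hφ, hψ, Category.comp_id]
  have inv_hom : ψ ≫ φ = 𝟙 _ := by
    rw [← cancel_epi e₂, ← Category.assoc, hψ, hφ, Category.comp_id]
  let ι : ((P₁ : (Sheaf J (Type v))ᵒᵖ) : (Sheaf J (Type v))ᵒᵖ).unop ≅
      ((P₂ : (Sheaf J (Type v))ᵒᵖ) : (Sheaf J (Type v))ᵒᵖ).unop :=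
    ⟨φ, ψ, hom_inv, inv_hom⟩
  refine Subobject.mk_eq_mk_of_comm _ _ ι.op.symm (Quiver.Hom.unop_inj ?_)
  simpa using hψ

lemma isSeparating_range_sheafified_yoneda (J : GrothendieckTopology C) :
    ObjectProperty.IsSeparating (Set.range (fun X : C =>
      (presheafToSheaf J (Type v)).obj (yoneda.obj X)) : ObjectProperty _) := by
  intro X Y f g hfg
  set adj := sheafificationAdjunction J (Type v) with hadj
  apply Sheaf.hom_ext
  apply NatTrans.ext
  funext U
  ext x
  let h₀ : yoneda.obj U.unop ⟶ X.val := yonedaEquiv.symm x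
  have key := hfg _ ⟨U.unop, rfl⟩ ((adj.homEquiv _ X).symm h₀)
  have key2 : h₀ ≫ f.hom = h₀ ≫ g.hom := by
    have h3 := congrArg (adj.homEquiv (yoneda.obj U.unop) Y) key
    rw [adj.homEquiv_naturality_right, adj.homEquiv_naturality_right,
      Equiv.apply_symm_apply] at h3
    exact h3
  have h4 := congrArg yonedaEquiv key2
  rw [yonedaEquiv_comp, yonedaEquiv_comp] at h4
  simpa [h₀, Equiv.apply_symm_apply] using h4

set_option synthInstance.maxHeartbeats 400000 in
/-- SAFT in a sheaf topos -/
lemma isLeftAdjoint_of_preservesColimits_sheaf (J : GrothendieckTopology C)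
    (F : Sheaf J (Type v) ⥤ Sheaf J (Type v)) [PreservesColimits F] : F.IsLeftAdjoint := by
  haveI := wellPowered_op J
  haveI : HasColimits (Sheaf J (Type v)) := ⟨fun _ _ => ⟨fun _ => HasColimit.mk
    ⟨Sheaf.sheafifyCocone (colimit.cocone _), Sheaf.isColimitSheafifyCocone _ (colimit.isColimit _)⟩⟩⟩
  haveI : ObjectProperty.Small.{v} (Set.range (fun X : C =>
      (presheafToSheaf J (Type v)).obj (yoneda.obj X)) : ObjectProperty _) :=
    small_of_surjective Set.rangeFactorization_surjective
  exact isLeftAdjoint_of_preservesColimits_of_isSeparating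
    (isSeparating_range_sheafified_yoneda J) F


/-- In a sheaf topos: the induced map from a pushout of a pullback square of monos
to the common codomain is a mono. -/
lemma mono_desc_sheaf {P A B Z : Sheaf J (Type v)} {p₁ : P ⟶ A} {p₂ : P ⟶ B}
    {a : A ⟶ Z} {b : B ⟶ Z} (hpb : IsPullback p₁ p₂ a b) (ha : Mono a) (hb : Mono b)
    {Q : Sheaf J (Type v)} {iA : A ⟶ Q} {iB : B ⟶ Q} (hpo : IsPushout p₁ p₂ iA iB)
    {m : Q ⟶ Z} (hma : iA ≫ m = a) (hmb : iB ≫ m = b) : Mono m := by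
  haveI := ha; haveI := hb
  set G := sheafToPresheaf J (Type v) with hG
  set L := presheafToSheaf J (Type v) with hL
  set adj := sheafificationAdjunction J (Type v) with hadj
  have hpb₀ : IsPullback p₁.hom p₂.hom a.hom b.hom := hpb.map G
  have hpo₀ : IsPushout p₁.hom p₂.hom (pushout.inl p₁.hom p₂.hom) (pushout.inr p₁.hom p₂.hom) :=
    IsPushout.of_hasPushout _ _
  set m₀ := pushout.desc a.hom b.hom hpb₀.w with hm₀
  have monom₀ : Mono m₀ := by
    rw [NatTrans.mono_iff_mono_app]
    intro U
    have hpb₁ := hpb₀.map ((evaluation Cᵒᵖ (Type v)).obj U)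
    have hpo₁ := hpo₀.map ((evaluation Cᵒᵖ (Type v)).obj U)
    haveI : Mono a.hom := inferInstance
    haveI : Mono b.hom := inferInstance
    refine mono_desc_type hpb₁ ((NatTrans.mono_iff_mono_app a.hom).mp inferInstance U)
      ((NatTrans.mono_iff_mono_app b.hom).mp inferInstance U) hpo₁ ?_ ?_
    · exact congr_fun (congrArg NatTrans.app (pushout.inl_desc a.hom b.hom hpb₀.w)) U
    · exact congr_fun (congrArg NatTrans.app (pushout.inr_desc a.hom b.hom hpb₀.w)) U
  -- transport the pushout along sheafification
  have hLpo : IsPushout (L.map p₁.hom) (L.map p₂.hom)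
      (L.map (pushout.inl p₁.hom p₂.hom)) (L.map (pushout.inr p₁.hom p₂.hom)) := hpo₀.map L
  have hpo₂ : IsPushout p₁ p₂
      (inv (adj.counit.app A) ≫ L.map (pushout.inl p₁.hom p₂.hom))
      (inv (adj.counit.app B) ≫ L.map (pushout.inr p₁.hom p₂.hom)) := by
    refine hLpo.of_iso (asIso (adj.counit.app P)) (asIso (adj.counit.app A))
      (asIso (adj.counit.app B)) (Iso.refl _) ?_ ?_ ?_ ?_
    · exact adj.counit.naturality p₁
    · exact adj.counit.naturality p₂
    · simp
    · simp
  set e : Q ≅ L.obj (pushout p₁.hom p₂.hom) :=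
    hpo.isColimit.coconePointUniqueUpToIso hpo₂.isColimit with he
  have heA : iA ≫ e.hom = inv (adj.counit.app A) ≫ L.map (pushout.inl p₁.hom p₂.hom) :=
    hpo.isColimit.comp_coconePointUniqueUpToIso_hom hpo₂.isColimit WalkingSpan.left
  have hm : m = e.hom ≫ L.map m₀ ≫ adj.counit.app Z := by
    apply hpo.hom_ext
    · rw [hma, ← Category.assoc, heA]
      rw [Category.assoc, ← Category.assoc (L.map _), ← L.map_comp,
        pushout.inl_desc]
      have hnat : L.map a.hom ≫ adj.counit.app Z = adj.counit.app A ≫ a :=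
        adj.counit.naturality a
      rw [hnat]
      simp
    · have heB : iB ≫ e.hom = inv (adj.counit.app B) ≫ L.map (pushout.inr p₁.hom p₂.hom) :=
        hpo.isColimit.comp_coconePointUniqueUpToIso_hom hpo₂.isColimit WalkingSpan.right
      rw [hmb, ← Category.assoc, heB]
      rw [Category.assoc, ← Category.assoc (L.map _), ← L.map_comp,
        pushout.inr_desc]
      have hnat : L.map b.hom ≫ adj.counit.app Z = adj.counit.app B ≫ b :=
        adj.counit.naturality b
      rw [hnat]
      simp
  rw [hm]
  haveI : Mono (L.map m₀) := L.map_mono m₀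
  exact mono_comp _ _


end SheafAux

end Stmt3Aux

/-- in a Grothendieck topos (presented as the category of sheaves on a
small site), a functorial cylinder for `(Mono, Mono^□)` is cartesian if and only if it
satisfies DH1: the cylinder functor preserves monomorphisms and all colimits. -/
theorem statement3 {C : Type v} [SmallCategory C] (J : GrothendieckTopology C)
    (cyl : Cylinder (Sheaf J (Type v)))
    (hcyl : cyl.IsCylinderFor (MorphismProperty.monomorphisms (Sheaf J (Type v)))) :
    cyl.IsCartesian (MorphismProperty.monomorphisms (Sheaf J (Type v))) ↔
      ((∀ ⦃X Y : Sheaf J (Type v)⦄ (f : X ⟶ Y), Mono f → Mono (cyl.C.map f)) ∧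
        Nonempty (PreservesColimits cyl.C)) := by
  constructor
  · rintro ⟨hLA, hsγ, hsγ₀, hsγ₁⟩
    constructor
    · intro X Y f hf
      haveI := hf
      have hstar : Mono (starMap cyl.γ₀ f) := hsγ₀ f hf
      have hpo : IsPushout ((𝟭 (Sheaf J (Type v))).map f) (cyl.γ₀.app X)
          (pushout.inl _ _) (pushout.inr _ _) := IsPushout.of_hasPushout _ _
      haveI : Mono ((𝟭 (Sheaf J (Type v))).map f) := hf
      haveI : Mono (pushout.inr ((𝟭 (Sheaf J (Type v))).map f) (cyl.γ₀.app X)) :=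
        Adhesive.mono_of_isPushout_of_mono_left hpo
      have heq : cyl.C.map f = pushout.inr _ _ ≫ starMap cyl.γ₀ f := by
        rw [starMap, pushout.inr_desc]
      rw [heq]
      exact mono_comp _ _
    · obtain ⟨R, ⟨adj⟩⟩ := hLA
      exact ⟨adj.leftAdjoint_preservesColimits⟩
  · rintro ⟨hmono, ⟨hpc⟩⟩
    haveI := hpc
    have hγmono : ∀ X : Sheaf J (Type v), Mono (cyl.γ.app X) := hcyl
    have hγ₀mono : ∀ X : Sheaf J (Type v), Mono (cyl.γ₀.app X) := by
      intro X
      haveI : IsSplitMono (cyl.γ₀.app X) := IsSplitMono.mk' ⟨cyl.σ.app X, by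
        have h := coprod.inl ≫= cyl.fac X
        rw [coprod.inl_desc] at h
        exact (Category.assoc _ _ _).trans h⟩
      infer_instance
    have hγ₁mono : ∀ X : Sheaf J (Type v), Mono (cyl.γ₁.app X) := by
      intro X
      haveI : IsSplitMono (cyl.γ₁.app X) := IsSplitMono.mk' ⟨cyl.σ.app X, by
        have h := coprod.inr ≫= cyl.fac X
        rw [coprod.inr_desc] at h
        exact (Category.assoc _ _ _).trans h⟩
      infer_instance
    have hCmono : ∀ ⦃X Y : Sheaf J (Type v)⦄ (f : X ⟶ Y), Mono f → Mono (cyl.C.map f) :=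
      hmono
    have hid_mono : ∀ ⦃X Y : Sheaf J (Type v)⦄ (f : X ⟶ Y), Mono f →
        Mono ((𝟭 (Sheaf J (Type v))).map f) := fun _ _ f hf => hf
    have hid_po : ∀ ⦃W X Y Z : Sheaf J (Type v)⦄ {f : W ⟶ X} {g : W ⟶ Y} {h : X ⟶ Z}
        {i : Y ⟶ Z}, IsPushout f g h i →
        IsPushout ((𝟭 (Sheaf J (Type v))).map f) ((𝟭 (Sheaf J (Type v))).map g)
          ((𝟭 (Sheaf J (Type v))).map h) ((𝟭 (Sheaf J (Type v))).map i) :=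
      fun _ _ _ _ _ _ _ _ H => H
    have hd_mono : ∀ ⦃X Y : Sheaf J (Type v)⦄ (f : X ⟶ Y), Mono f →
        Mono ((double (Sheaf J (Type v))).map f) :=
      fun _ _ f hf => Stmt3Aux.mono_coprod_map f f hf hf
    have hd_po : ∀ ⦃W X Y Z : Sheaf J (Type v)⦄ {f : W ⟶ X} {g : W ⟶ Y} {h : X ⟶ Z}
        {i : Y ⟶ Z}, IsPushout f g h i →
        IsPushout ((double (Sheaf J (Type v))).map f) ((double (Sheaf J (Type v))).map g)
          ((double (Sheaf J (Type v))).map h) ((double (Sheaf J (Type v))).map i) :=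
      fun _ _ _ _ _ _ _ _ H => Stmt3Aux.isPushout_coprod_map H
    refine ⟨Stmt3Aux.isLeftAdjoint_of_preservesColimits_sheaf J cyl.C, ?_, ?_, ?_⟩
    · intro X Y f hf
      have hf' : Mono f := hf
      have hpb := Stmt3Aux.isPullback_naturality cyl.γ hd_mono hd_po hCmono hγmono f hf'
      exact Stmt3Aux.mono_desc_sheaf hpb (hγmono Y) (hCmono f hf')
        (IsPushout.of_hasPushout _ _) (pushout.inl_desc _ _ _) (pushout.inr_desc _ _ _)
    · intro X Y f hf
      have hf' : Mono f := hf
      have hpb := Stmt3Aux.isPullback_naturality cyl.γ₀ hid_mono hid_po hCmono hγ₀mono f hf'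
      exact Stmt3Aux.mono_desc_sheaf hpb (hγ₀mono Y) (hCmono f hf')
        (IsPushout.of_hasPushout _ _) (pushout.inl_desc _ _ _) (pushout.inr_desc _ _ _)
    · intro X Y f hf
      have hf' : Mono f := hf
      have hpb := Stmt3Aux.isPullback_naturality cyl.γ₁ hid_mono hid_po hCmono hγ₁mono f hf'
      exact Stmt3Aux.mono_desc_sheaf hpb (hγ₁mono Y) (hCmono f hf')
        (IsPushout.of_hasPushout _ _) (pushout.inl_desc _ _ _) (pushout.inr_desc _ _ _)


end Paper
end

section
/- Let E be a Grothendieck topos and (Cyl, γ, σ) a cylinder for the weak factorization system (Mono, Mono^□). Then DH1 implies DH2, and DH2 implies DH3, where: DH1 says Cyl preserves monomorphisms and all colimits; DH2 says for every monomorphism f: X → Y and k = 0,1 the square with top γ^k_X: X → Cyl X, left f, right Cyl f, bottom γ^k_Y: Y → Cyl Y is a pullback; DH3 says for every monomorphism f: X → Y the square with top γ_X: X + X → Cyl X, left f + f, right Cyl f, bottom γ_Y: Y + Y → Cyl Y is a pullback. -/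
/-!
Common definitions: weak factorization systems, functorial cylinders,
Cisinski's construction, localizers, locally presentable categories.
-/

universe w v u u₁ u₂ u₃

open CategoryTheory Limits Opposite

namespace Paper

variable {K : Type u} [Category.{v} K]

/-- binary coproducts of sheaves of types (instance search times out otherwise) -/
instance sheafTypeHasBinaryCoproducts {C : Type v} [SmallCategory C]
    (J : GrothendieckTopology C) :
    HasColimitsOfShape (Discrete WalkingPair) (Sheaf J (Type v)) :=
  Sheaf.instHasColimitsOfShape

section AuxProofs

variable {E : Type u₃} [Category.{w} E]

/-- If `Cf` preserves monomorphisms, then in an adhesive category any naturality square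
of a sectionwise-mono natural transformation `δ : 𝟭 E ⟶ Cf` at a monomorphism is a pullback. -/
lemma aux_isPullback_of_preserves_mono [Adhesive E]
    (Cf : E ⥤ E) (δ : 𝟭 E ⟶ Cf) (hδ : ∀ Z : E, Mono (δ.app Z))
    (hm : ∀ ⦃X Y : E⦄ (f : X ⟶ Y), Mono f → Mono (Cf.map f))
    {X Y : E} (f : X ⟶ Y) (hf : Mono f) :
    IsPullback (δ.app X) f (Cf.map f) (δ.app Y) := by
  haveI : Mono f := hf
  haveI : Mono (Cf.map f) := hm f hf
  have hpo : IsPushout f f (pushout.inl f f) (pushout.inr f f) := IsPushout.of_hasPushout f f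
  have hpb : IsPullback f f (pushout.inl f f) (pushout.inr f f) :=
    Adhesive.isPullback_of_isPushout_of_mono_left hpo
  have w : δ.app X ≫ Cf.map f = f ≫ δ.app Y := (δ.naturality f).symm
  have hc : ∀ s : PullbackCone (Cf.map f) (δ.app Y),
      s.snd ≫ pushout.inl f f = s.snd ≫ pushout.inr f f := by
    intro s
    haveI := hδ (pushout f f)
    rw [← cancel_mono (δ.app (pushout f f))]
    have h1 := δ.naturality (pushout.inl f f)
    have h2 := δ.naturality (pushout.inr f f)
    dsimp at h1 h2
    rw [Category.assoc, Category.assoc, h1, h2, ← Category.assoc s.snd, ← s.condition,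
      ← Category.assoc s.snd, ← s.condition, Category.assoc, Category.assoc,
      ← Functor.map_comp, ← Functor.map_comp, pushout.condition]
  refine IsPullback.of_isLimit (PullbackCone.IsLimit.mk w
    (fun s => hpb.lift s.snd s.snd (hc s)) (fun s => ?_) (fun s => hpb.lift_fst _ _ _)
    (fun s m hm1 hm2 => ?_))
  · rw [← cancel_mono (Cf.map f), Category.assoc, w, ← Category.assoc,
      hpb.lift_fst, s.condition]
  · rw [← cancel_mono f, hm2, hpb.lift_fst]

/-- DH2 implies DH3, in a finitary extensive category with pullbacks. -/
lemma aux_isPullback_coprod [HasBinaryCoproducts E] [HasPullbacks E] [FinitaryExtensive E]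
    (cyl : Cylinder E) (hγ : ∀ Z : E, Mono (cyl.γ.app Z))
    {X Y : E} (f : X ⟶ Y)
    (h0 : IsPullback (cyl.γ₀.app X) f (cyl.C.map f) (cyl.γ₀.app Y))
    (h1 : IsPullback (cyl.γ₁.app X) f (cyl.C.map f) (cyl.γ₁.app Y)) :
    IsPullback (cyl.γ.app X) ((double E).map f) (cyl.C.map f) (cyl.γ.app Y) := by
  have w : cyl.γ.app X ≫ cyl.C.map f = (double E).map f ≫ cyl.γ.app Y :=
    (cyl.γ.naturality f).symm
  have hdec : ∀ s : PullbackCone (cyl.C.map f) (cyl.γ.app Y),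
      ∃ l : s.pt ⟶ (double E).obj X,
        l ≫ cyl.γ.app X = s.fst ∧ l ≫ (double E).map f = s.snd := by
    intro s
    let snd' : s.pt ⟶ (Y ⨿ Y : E) := s.snd
    let p₀ : pullback (coprod.inl : Y ⟶ Y ⨿ Y) snd' ⟶ Y := pullback.fst _ _
    let q₀ : pullback (coprod.inl : Y ⟶ Y ⨿ Y) snd' ⟶ s.pt := pullback.snd _ _
    let p₁ : pullback (coprod.inr : Y ⟶ Y ⨿ Y) snd' ⟶ Y := pullback.fst _ _
    let q₁ : pullback (coprod.inr : Y ⟶ Y ⨿ Y) snd' ⟶ s.pt := pullback.snd _ _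
    have hw₀ : (q₀ ≫ s.fst) ≫ cyl.C.map f = p₀ ≫ cyl.γ₀.app Y := by
      have : cyl.γ₀.app Y = coprod.inl ≫ cyl.γ.app Y := rfl
      erw [this, Category.assoc, s.condition, ← Category.assoc, ← pullback.condition,
        Category.assoc]
      rfl
    have hw₁ : (q₁ ≫ s.fst) ≫ cyl.C.map f = p₁ ≫ cyl.γ₁.app Y := by
      have : cyl.γ₁.app Y = coprod.inr ≫ cyl.γ.app Y := rfl
      erw [this, Category.assoc, s.condition, ← Category.assoc, ← pullback.condition,
        Category.assoc]
      rfl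
    let l₀ : pullback (coprod.inl : Y ⟶ Y ⨿ Y) snd' ⟶ X := h0.lift (q₀ ≫ s.fst) p₀ hw₀
    let l₁ : pullback (coprod.inr : Y ⟶ Y ⨿ Y) snd' ⟶ X := h1.lift (q₁ ≫ s.fst) p₁ hw₁
    obtain ⟨hW⟩ := ((FinitaryExtensive.vanKampen _ (coprodIsCoprod Y Y)).isUniversal
      (BinaryCofan.mk q₀ q₁) (mapPair p₀ p₁) snd'
      (by
        apply NatTrans.ext; funext j
        rcases j with ⟨_ | _⟩
        · exact pullback.condition
        · exact pullback.condition)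
      (mapPair_equifibered _)
      (by
        rintro ⟨_ | _⟩
        · exact (IsPullback.of_hasPullback (coprod.inl : Y ⟶ Y ⨿ Y) snd').flip
        · exact (IsPullback.of_hasPullback (coprod.inr : Y ⟶ Y ⨿ Y) snd').flip))
    let l : s.pt ⟶ (X ⨿ X : E) :=
      hW.desc (BinaryCofan.mk (l₀ ≫ coprod.inl) (l₁ ≫ coprod.inr))
    have hl₀ : q₀ ≫ l = l₀ ≫ coprod.inl :=
      hW.fac (BinaryCofan.mk (l₀ ≫ coprod.inl) (l₁ ≫ coprod.inr)) ⟨WalkingPair.left⟩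
    have hl₁ : q₁ ≫ l = l₁ ≫ coprod.inr :=
      hW.fac (BinaryCofan.mk (l₀ ≫ coprod.inl) (l₁ ≫ coprod.inr)) ⟨WalkingPair.right⟩
    refine ⟨l, ?_, ?_⟩
    · refine hW.hom_ext ?_
      rintro ⟨_ | _⟩
      · show q₀ ≫ l ≫ cyl.γ.app X = q₀ ≫ s.fst
        erw [← Category.assoc, hl₀, Category.assoc]
        have : coprod.inl ≫ cyl.γ.app X = cyl.γ₀.app X := rfl
        rw [this, h0.lift_fst]
      · show q₁ ≫ l ≫ cyl.γ.app X = q₁ ≫ s.fst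
        erw [← Category.assoc, hl₁, Category.assoc]
        have : coprod.inr ≫ cyl.γ.app X = cyl.γ₁.app X := rfl
        rw [this, h1.lift_fst]
    · refine hW.hom_ext ?_
      rintro ⟨_ | _⟩
      · show q₀ ≫ l ≫ (double E).map f = q₀ ≫ snd'
        erw [← Category.assoc, hl₀, Category.assoc]
        have : coprod.inl ≫ (double E).map f = f ≫ coprod.inl := by simp [double]
        erw [this, ← Category.assoc, h0.lift_snd, pullback.condition]
        rfl
      · show q₁ ≫ l ≫ (double E).map f = q₁ ≫ snd'
        erw [← Category.assoc, hl₁, Category.assoc]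
        have : coprod.inr ≫ (double E).map f = f ≫ coprod.inr := by simp [double]
        erw [this, ← Category.assoc, h1.lift_snd, pullback.condition]
        rfl
  choose lft hfst hsnd using hdec
  refine IsPullback.of_isLimit (PullbackCone.IsLimit.mk w lft hfst hsnd
    (fun s m hm1 hm2 => ?_))
  haveI : Mono (cyl.γ.app X) := hγ X
  rw [← cancel_mono (cyl.γ.app X), hm1, hfst]

end AuxProofs

/-- in a Grothendieck topos, for a cylinder for `(Mono, Mono^□)`:
DH1 implies DH2, and DH2 implies DH3. -/
theorem statement4 {C : Type v} [SmallCategory C] (J : GrothendieckTopology C)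
    (cyl : Cylinder (Sheaf J (Type v)))
    (hcyl : cyl.IsCylinderFor (MorphismProperty.monomorphisms (Sheaf J (Type v)))) :
    -- DH1 → DH2
    ((((∀ ⦃X Y : Sheaf J (Type v)⦄ (f : X ⟶ Y), Mono f → Mono (cyl.C.map f)) ∧
        Nonempty (PreservesColimits cyl.C)) →
      (∀ ⦃X Y : Sheaf J (Type v)⦄ (f : X ⟶ Y), Mono f →
        (IsPullback (cyl.γ₀.app X) f (cyl.C.map f) (cyl.γ₀.app Y) ∧
         IsPullback (cyl.γ₁.app X) f (cyl.C.map f) (cyl.γ₁.app Y)))) ∧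
    -- DH2 → DH3
     ((∀ ⦃X Y : Sheaf J (Type v)⦄ (f : X ⟶ Y), Mono f →
        (IsPullback (cyl.γ₀.app X) f (cyl.C.map f) (cyl.γ₀.app Y) ∧
         IsPullback (cyl.γ₁.app X) f (cyl.C.map f) (cyl.γ₁.app Y))) →
      (∀ ⦃X Y : Sheaf J (Type v)⦄ (f : X ⟶ Y), Mono f →
        IsPullback (cyl.γ.app X) ((double (Sheaf J (Type v))).map f)
          (cyl.C.map f) (cyl.γ.app Y)))) := by
  constructor
  · rintro ⟨hmono, -⟩ X Y f hf
    have hδ0 : ∀ Z : Sheaf J (Type v), Mono (cyl.γ₀.app Z) := by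
      intro Z
      haveI : Mono (cyl.γ.app Z) := hcyl Z
      show Mono (coprod.inl ≫ cyl.γ.app Z)
      exact mono_comp' inferInstance this
    have hδ1 : ∀ Z : Sheaf J (Type v), Mono (cyl.γ₁.app Z) := by
      intro Z
      haveI : Mono (cyl.γ.app Z) := hcyl Z
      show Mono (coprod.inr ≫ cyl.γ.app Z)
      exact mono_comp' inferInstance this
    exact ⟨aux_isPullback_of_preserves_mono cyl.C cyl.γ₀ hδ0 hmono f hf,
      aux_isPullback_of_preserves_mono cyl.C cyl.γ₁ hδ1 hmono f hf⟩
  · intro h2 X Y f hf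
    exact aux_isPullback_coprod cyl (fun Z => hcyl Z) f (h2 f hf).1 (h2 f hf).2


end Paper
end

section
/- Let R be a ring, V an R-R-bimodule and v: R → V a map of R-R-bimodules. Define, for each left R-module M, Cyl_v(M) = M ⊕ (V ⊗_R M), with γ⁰_M: M → Cyl_v(M) the first inclusion, γ¹_M = (id_M, v ⊗ id_M): M → Cyl_v(M), γ_M = (γ⁰_M | γ¹_M): M ⊕ M → Cyl_v(M), and σ_M: Cyl_v(M) → M the first projection. Then (Cyl_v, γ, σ) is a cylinder for the weak factorization system (Mono, Mono^□) on the category of left R-modules if and only if v is a pure monomorphism of right R-modules. Moreover, in that case two maps f, g: M → N are homotopic if and only if g − f factors through the map v ⊗ id_M: M → V ⊗_R M. -/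
universe u
open scoped TensorProduct
open MulOpposite
namespace Paper

variable (R V : Type u) [Ring R] [AddCommGroup V] [Module R V] [Module Rᵐᵒᵖ V]
  [SMulCommClass R Rᵐᵒᵖ V]

/-- relators defining `V ⊗_R M` as a quotient of `V ⊗_ℤ M` -/
def relators (M : Type u) [AddCommGroup M] [Module R M] :
    Submodule R (TensorProduct ℤ V M) :=
  Submodule.span R
    { t | ∃ (w : V) (r : R) (m : M), t = (op r • w) ⊗ₜ[ℤ] m - w ⊗ₜ[ℤ] (r • m) }

/-- the tensor product `V ⊗_R M` of the right module `V` with the left module `M` -/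
abbrev NTensor (M : Type u) [AddCommGroup M] [Module R M] : Type u :=
  TensorProduct ℤ V M ⧸ relators R V M

/-- the map `M ≅ R ⊗_R M → V ⊗_R M` induced by `v : R → V` -/
noncomputable def vMap (v : R →ₗ[R] V) (hv : ∀ x s : R, v (x * s) = op s • v x)
    (M : Type u) [AddCommGroup M] [Module R M] : M →ₗ[R] NTensor R V M where
  toFun m := Submodule.Quotient.mk ((v 1) ⊗ₜ[ℤ] m)
  map_add' m m' := by (try simp only []); rw [TensorProduct.tmul_add, Submodule.Quotient.mk_add]
  map_smul' r m := by
    simp only [RingHom.id_apply]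
    have key : r • v 1 = op r • v 1 := by
      rw [← map_smul v r 1, smul_eq_mul, mul_one, ← hv 1 r, one_mul]
    rw [← Submodule.Quotient.mk_smul, TensorProduct.smul_tmul', key]
    refine (Submodule.Quotient.eq _).mpr ?_
    have hgen : ((op r • v 1) ⊗ₜ[ℤ] m - (v 1) ⊗ₜ[ℤ] (r • m)) ∈ relators R V M :=
      Submodule.subset_span ⟨v 1, r, m, rfl⟩
    have h := neg_mem hgen
    rwa [neg_sub] at h

/-- `γ_M : M ⊕ M → Cyl_v M = M ⊕ (V ⊗_R M)` -/
noncomputable def cylGamma (v : R →ₗ[R] V) (hv : ∀ x s : R, v (x * s) = op s • v x)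
    (M : Type u) [AddCommGroup M] [Module R M] :
    (M × M) →ₗ[R] M × NTensor R V M :=
  LinearMap.prod (LinearMap.fst R M M + LinearMap.snd R M M)
    ((vMap R V v hv M).comp (LinearMap.snd R M M))


/-- `(Cyl_v, γ, σ)` with `Cyl_v(M) = M ⊕ (V ⊗_R M)` is a cylinder for
`(Mono, Mono^□)` on left `R`-modules (i.e. each `γ_M` is injective; the factorization
`σ_M ∘ γ_M = codiagonal` holds by construction) if and only if `v` is a pure
monomorphism of right `R`-modules (i.e. `v ⊗_R M : M ≅ R ⊗_R M → V ⊗_R M` is injective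
for every left module `M`).  Moreover, in that case two maps `f, g : M → N` are
homotopic (the map `(f|g) : M ⊕ M → N` factors through `γ_M`) if and only if `g - f`
factors through `v ⊗ id_M : M → V ⊗_R M`. -/
theorem statement5 (R V : Type u) [Ring R] [AddCommGroup V] [Module R V] [Module Rᵐᵒᵖ V]
    [SMulCommClass R Rᵐᵒᵖ V] (v : R →ₗ[R] V)
    (hv : ∀ x s : R, v (x * s) = op s • v x) :
    ((∀ (M : Type u) [AddCommGroup M] [Module R M],
        Function.Injective (cylGamma R V v hv M)) ↔
      (∀ (M : Type u) [AddCommGroup M] [Module R M],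
        Function.Injective (vMap R V v hv M))) ∧
    ((∀ (M : Type u) [AddCommGroup M] [Module R M],
        Function.Injective (vMap R V v hv M)) →
      ∀ (M N : Type u) [AddCommGroup M] [Module R M] [AddCommGroup N] [Module R N]
        (f g : M →ₗ[R] N),
        ((∃ h : (M × NTensor R V M) →ₗ[R] N,
            h.comp (cylGamma R V v hv M) = LinearMap.coprod f g) ↔
          (∃ k : NTensor R V M →ₗ[R] N, k.comp (vMap R V v hv M) = g - f))) := by
  have hγ : ∀ (M : Type u) [AddCommGroup M] [Module R M] (a b : M),
      cylGamma R V v hv M (a, b) = (a + b, vMap R V v hv M b) := by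
    intro M _ _ a b; rfl
  constructor
  · constructor
    · intro H M _ _
      rw [injective_iff_map_eq_zero]
      intro m hm
      have h0 : cylGamma R V v hv M (-m, m) = 0 := by
        rw [hγ, hm, neg_add_cancel]; rfl
      have := H M (a₁ := (-m, m)) (a₂ := 0) (by simpa using h0)
      exact (Prod.mk.injEq _ _ _ _ ▸ this).2
    · intro H M _ _
      rw [injective_iff_map_eq_zero]
      rintro ⟨a, b⟩ hab
      rw [hγ] at hab
      have h1 : a + b = 0 := congrArg Prod.fst hab
      have h2 : vMap R V v hv M b = 0 := congrArg Prod.snd hab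
      have hb : b = 0 := (injective_iff_map_eq_zero _).mp (H M) _ h2
      have ha : a = 0 := by rwa [hb, add_zero] at h1
      rw [ha, hb]; rfl
  · intro _ M N _ _ _ _ f g
    constructor
    · rintro ⟨h, hh⟩
      refine ⟨h.comp (LinearMap.inr R M (NTensor R V M)), ?_⟩
      ext m
      have e1 : h (cylGamma R V v hv M (0, m)) = f 0 + g m := by
        rw [← LinearMap.comp_apply, hh]; simp
      rw [hγ, zero_add] at e1
      have e2 : h (cylGamma R V v hv M (m, 0)) = f m + g 0 := by
        rw [← LinearMap.comp_apply, hh]; simp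
      rw [hγ, add_zero, map_zero] at e2
      simp only [map_zero, add_zero, zero_add] at e1 e2
      simp only [LinearMap.comp_apply, LinearMap.inr_apply, LinearMap.sub_apply]
      rw [eq_sub_iff_add_eq, ← e2, ← map_add]
      rw [show ((0 : M), vMap R V v hv M m) + (m, 0) = (m, vMap R V v hv M m) by simp]
      exact e1
    · rintro ⟨k, hk⟩
      refine ⟨f.comp (LinearMap.fst R M (NTensor R V M)) +
        k.comp (LinearMap.snd R M (NTensor R V M)), ?_⟩
      apply LinearMap.ext; rintro ⟨a, b⟩
      have hkb : k (vMap R V v hv M b) = g b - f b := by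
        rw [← LinearMap.comp_apply, hk]; rfl
      simp [hγ, hkb]

end Paper
end

section
/- Let (L, R) be a weak factorization system on a category K in which every object is cofibrant, and let (Cyl, γ, σ) be a functorial cylinder for (L,R). Then every map f: X → Y in R = L^□ is a dual strong deformation retract: there exist g: Y → X and h: Cyl X → X such that f ∘ g = id_Y, h ∘ γ⁰_X = id_X, h ∘ γ¹_X = g ∘ f, and f ∘ h = f ∘ σ_X. -/
/-!
Common definitions: weak factorization systems, functorial cylinders,
Cisinski's construction, localizers, locally presentable categories.
-/

universe w v u u₁ u₂ u₃

open CategoryTheory Limits Opposite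

namespace Paper

variable {K : Type u} [Category.{v} K]

/-- Lemma 3.?: for a weak factorization system `(L,R)` in which every
object is cofibrant and a functorial cylinder, every map in `R = L^□` is a dual strong
deformation retract. -/
theorem statement13 {K : Type u} [Category.{v} K]
    [HasInitial K] [HasBinaryCoproducts K]
    (L R : MorphismProperty K) (hwfs : IsWFS L R)
    (hcof : AllCofibrant L)
    (cyl : Cylinder K) (hcyl : cyl.IsCylinderFor L)
    {X Y : K} (f : X ⟶ Y) (hf : R f) :
    ∃ (g : Y ⟶ X) (h : cyl.C.obj X ⟶ X),
      g ≫ f = 𝟙 Y ∧ cyl.γ₀.app X ≫ h = 𝟙 X ∧ cyl.γ₁.app X ≫ h = f ≫ g ∧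
        h ≫ f = cyl.σ.app X ≫ f := by
  have hfR : Rlp L f := by rw [hwfs.rlp_eq] at hf; exact hf
  -- get the section g
  have h1 : HasLiftingProperty (initial.to Y) f := hfR _ (hcof Y)
  have sq1 : CommSq (initial.to X) (initial.to Y) f (𝟙 Y) := ⟨by simp⟩
  obtain ⟨⟨⟨g, hg1, hg2⟩⟩⟩ := h1.sq_hasLift sq1
  -- get the homotopy h
  have h2 : HasLiftingProperty (cyl.γ.app X) f := hfR _ (hcyl X)
  have sq2 : CommSq (coprod.desc (𝟙 X) (f ≫ g)) (cyl.γ.app X) f (cyl.σ.app X ≫ f) := by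
    constructor
    have e : cyl.γ.app X ≫ cyl.σ.app X ≫ f = coprod.desc (𝟙 X) (𝟙 X) ≫ f :=
      (Category.assoc _ _ _).symm.trans (congrArg (· ≫ f) (cyl.fac X))
    refine Eq.trans ?_ e.symm
    ext
    · exact (coprod.inl_desc_assoc _ _ _).trans (coprod.inl_desc_assoc _ _ _).symm
    · rw [coprod.inr_desc_assoc, coprod.inr_desc_assoc, Category.assoc, hg2, Category.comp_id, Category.id_comp]
  obtain ⟨⟨⟨h, hh1, hh2⟩⟩⟩ := h2.sq_hasLift sq2
  refine ⟨g, h, by simpa using hg2, ?_, ?_, hh2⟩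
  · have := congrArg (fun t => coprod.inl ≫ t) hh1
    exact (Category.assoc _ _ _).trans (this.trans (coprod.inl_desc _ _))
  · have := congrArg (fun t => coprod.inr ≫ t) hh1
    exact (Category.assoc _ _ _).trans (this.trans (coprod.inr_desc _ _))

end Paper
end

section
/- Let K be a locally presentable category, (C, C^□) a cofibrant weak factorization system generated by a set I ⊆ C, (Cyl, γ, σ) a cartesian cylinder for (C, C^□), and S ⊆ C a subset, with Λ = Λ(Cyl,S,I). Then □(Λ^□) ⊆ W(Cyl,S,I). -/
/-!
Common definitions: weak factorization systems, functorial cylinders,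
Cisinski's construction, localizers, locally presentable categories.
-/

universe w v u u₁ u₂ u₃

open CategoryTheory Limits Opposite

namespace Paper

variable {K : Type u} [Category.{v} K]

section Statement17Aux

variable {K : Type u} [Category.{v} K]

/-- A binary product of `T` with itself, given by explicit data. -/
structure GoodPair (T : K) where
  P : K
  π₀ : P ⟶ T
  π₁ : P ⟶ T
  lift : ∀ {B : K}, (B ⟶ T) → (B ⟶ T) → (B ⟶ P)
  lift_fst : ∀ {B : K} (u v : B ⟶ T), lift u v ≫ π₀ = u
  lift_snd : ∀ {B : K} (u v : B ⟶ T), lift u v ≫ π₁ = v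
  hom_ext : ∀ {B : K} (m m' : B ⟶ P),
    m ≫ π₀ = m' ≫ π₀ → m ≫ π₁ = m' ≫ π₁ → m = m'

/-- The category of spans `T ⟵ a ⟶ T` with vertex in `A`. -/
structure SpanIdx (A : Set K) (T : K) : Type max u v where
  a : K
  ha : a ∈ A
  u : a ⟶ T
  v : a ⟶ T

/-- a one-object index category (used for span endomorphisms of `Q`) -/
structure EndIdx (A : Set K) (T : K) : Type where
  mk ::

instance (A : Set K) (T : K) : Category.{v} (SpanIdx A T) where
  Hom s t := { g : s.a ⟶ t.a // g ≫ t.u = s.u ∧ g ≫ t.v = s.v }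
  id s := ⟨𝟙 s.a, by simp, by simp⟩
  comp f g := ⟨f.1 ≫ g.1,
    by rw [Category.assoc, g.2.1, f.2.1], by rw [Category.assoc, g.2.2, f.2.2]⟩
  id_comp f := Subtype.ext (Category.id_comp f.1)
  comp_id f := Subtype.ext (Category.comp_id f.1)
  assoc f g h := Subtype.ext (Category.assoc f.1 g.1 h.1)

/-- The spans with vertex in `A` form a small type if `A` is small. -/
def spanIdxEquivSigma (A : Set K) (T : K) :
    SpanIdx A T ≃ Σ x : A, Σ _ : ((x : K) ⟶ T), ((x : K) ⟶ T) where
  toFun s := ⟨⟨s.a, s.ha⟩, s.u, s.v⟩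
  invFun p := ⟨p.1.1, p.1.2, p.2.1, p.2.2⟩
  left_inv s := rfl
  right_inv p := rfl

instance (A : Set K) (T : K) [Small.{v} A] : Small.{v} (SpanIdx A T) :=
  small_map (spanIdxEquivSigma A T)

instance (A : Set K) (T : K) [Small.{v} A] [HasColimits K] :
    HasColimitsOfShape (SpanIdx A T) K := by
  haveI : EssentiallySmall.{v} (SpanIdx A T) :=
    essentiallySmall_of_small_of_locallySmall _
  exact hasColimitsOfShape_of_equivalence (equivSmallModel (SpanIdx A T)).symm

/-- The vertex functor on the category of spans. -/
@[simps] def spanIdxFunctor (A : Set K) (T : K) : SpanIdx A T ⥤ K where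
  obj s := s.a
  map g := g.1

instance (A : Set K) (T : K) : Unique (EndIdx A T) :=
  ⟨⟨⟨⟩⟩, fun ⟨⟩ => rfl⟩

instance (A : Set K) (T : K) : Small.{v} (EndIdx A T) :=
  small_map (Equiv.equivPUnit.{1, v+1} (EndIdx A T))

section Q

variable (A : Set K) (T : K) [Small.{v} A] [HasColimits K]

/-- The weakly terminal span vertex. -/
noncomputable def Qob : K := colimit (spanIdxFunctor A T)

/-- first leg of the weakly terminal span -/
noncomputable def Qfst : Qob A T ⟶ T :=
  colimit.desc (spanIdxFunctor A T)
    { pt := T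
      ι := { app := fun s => s.u
             naturality := fun s t g => by exact g.2.1.trans (Category.comp_id _).symm } }

/-- second leg of the weakly terminal span -/
noncomputable def Qsnd : Qob A T ⟶ T :=
  colimit.desc (spanIdxFunctor A T)
    { pt := T
      ι := { app := fun s => s.v
             naturality := fun s t g => by exact g.2.2.trans (Category.comp_id _).symm } }

@[simp] lemma ι_Qfst (s : SpanIdx A T) :
    colimit.ι (spanIdxFunctor A T) s ≫ Qfst A T = s.u :=
  colimit.ι_desc _ _

@[simp] lemma ι_Qsnd (s : SpanIdx A T) :
    colimit.ι (spanIdxFunctor A T) s ≫ Qsnd A T = s.v :=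
  colimit.ι_desc _ _

/-- `Q` is weakly terminal among spans over `(T,T)`. -/
lemma exists_span_hom {κ : Cardinal.{v}}
    (hgen : ∀ X : K, IsDirectedColimitFrom κ A X) (X : K) (u v : X ⟶ T) :
    ∃ q : X ⟶ Qob A T, q ≫ Qfst A T = u ∧ q ≫ Qsnd A T = v := by
  obtain ⟨J, pre, hdir, D, c, ⟨hc⟩, hpt, hobj⟩ := hgen X
  let sp : J → SpanIdx A T := fun j =>
    ⟨D.obj j, hobj j, c.ι.app j ≫ eqToHom hpt ≫ u, c.ι.app j ≫ eqToHom hpt ≫ v⟩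
  let coc : Cocone D :=
    { pt := Qob A T
      ι :=
        { app := fun j => colimit.ι (spanIdxFunctor A T) (sp j)
          naturality := fun j j' g => by
            have := colimit.w (spanIdxFunctor A T)
              (show sp j ⟶ sp j' from
                ⟨D.map g, by rw [← Category.assoc, c.w g],
                  by rw [← Category.assoc, c.w g]⟩)
            exact this.trans (Category.comp_id _).symm } }
  refine ⟨eqToHom hpt.symm ≫ hc.desc coc, ?_, ?_⟩
  · have h1 : hc.desc coc ≫ Qfst A T = eqToHom hpt ≫ u := by
      refine hc.hom_ext fun j => ?_
      rw [← Category.assoc, hc.fac coc j]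
      exact ι_Qfst A T (sp j)
    rw [Category.assoc, h1, ← Category.assoc, eqToHom_trans, eqToHom_refl,
      Category.id_comp]
  · have h1 : hc.desc coc ≫ Qsnd A T = eqToHom hpt ≫ v := by
      refine hc.hom_ext fun j => ?_
      rw [← Category.assoc, hc.fac coc j]
      exact ι_Qsnd A T (sp j)
    rw [Category.assoc, h1, ← Category.assoc, eqToHom_trans, eqToHom_refl,
      Category.id_comp]

noncomputable instance : Category.{v} (EndIdx A T) where
  Hom _ _ := { m : Qob A T ⟶ Qob A T //
    m ≫ Qfst A T = Qfst A T ∧ m ≫ Qsnd A T = Qsnd A T }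
  id _ := ⟨𝟙 _, by simp, by simp⟩
  comp f g := ⟨f.1 ≫ g.1,
    by rw [Category.assoc, g.2.1, f.2.1], by rw [Category.assoc, g.2.2, f.2.2]⟩
  id_comp f := Subtype.ext (Category.id_comp f.1)
  comp_id f := Subtype.ext (Category.comp_id f.1)
  assoc f g h := Subtype.ext (Category.assoc f.1 g.1 h.1)

instance : HasColimitsOfShape (EndIdx A T) K := by
  haveI : EssentiallySmall.{v} (EndIdx A T) :=
    essentiallySmall_of_small_of_locallySmall _
  exact hasColimitsOfShape_of_equivalence (equivSmallModel (EndIdx A T)).symm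

/-- The diagram of all span endomorphisms of `Q`. -/
noncomputable def endFunctor : EndIdx A T ⥤ K where
  obj _ := Qob A T
  map m := m.1
  map_id _ := rfl
  map_comp _ _ := rfl

/-- The true product of `T` with itself. -/
noncomputable def Tprod : K := colimit (endFunctor A T)

/-- The coequalizing map `Q ⟶ T × T`. -/
noncomputable def eQ : Qob A T ⟶ Tprod A T :=
  colimit.ι (endFunctor A T) ⟨⟩

lemma endo_comp_eQ (m : Qob A T ⟶ Qob A T)
    (h₀ : m ≫ Qfst A T = Qfst A T) (h₁ : m ≫ Qsnd A T = Qsnd A T) :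
    m ≫ eQ A T = eQ A T :=
  colimit.w (endFunctor A T) (show (⟨⟩ : EndIdx A T) ⟶ ⟨⟩ from ⟨m, h₀, h₁⟩)

lemma eQ_epi {Z : K} (α β : Tprod A T ⟶ Z)
    (h : eQ A T ≫ α = eQ A T ≫ β) : α = β := by
  refine colimit.hom_ext fun j => ?_
  obtain ⟨⟩ := j
  exact h

/-- first projection of the product -/
noncomputable def prodFst : Tprod A T ⟶ T :=
  colimit.desc (endFunctor A T)
    { pt := T
      ι := { app := fun _ => Qfst A T
             naturality := fun _ _ m => by exact m.2.1.trans (Category.comp_id _).symm } }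

/-- second projection of the product -/
noncomputable def prodSnd : Tprod A T ⟶ T :=
  colimit.desc (endFunctor A T)
    { pt := T
      ι := { app := fun _ => Qsnd A T
             naturality := fun _ _ m => by exact m.2.2.trans (Category.comp_id _).symm } }

@[simp] lemma eQ_prodFst : eQ A T ≫ prodFst A T = Qfst A T :=
  colimit.ι_desc _ _

@[simp] lemma eQ_prodSnd : eQ A T ≫ prodSnd A T = Qsnd A T :=
  colimit.ι_desc _ _

/-- The construction of an honest binary product `T × T` in a cocomplete category
with a small colimit-dense family of generators. -/
noncomputable def goodPair {κ : Cardinal.{v}}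
    (hgen : ∀ X : K, IsDirectedColimitFrom κ A X) : GoodPair T where
  P := Tprod A T
  π₀ := prodFst A T
  π₁ := prodSnd A T
  lift u v := (exists_span_hom A T hgen _ u v).choose ≫ eQ A T
  lift_fst u v := by
    rw [Category.assoc, eQ_prodFst]
    exact (exists_span_hom A T hgen _ u v).choose_spec.1
  lift_snd u v := by
    rw [Category.assoc, eQ_prodSnd]
    exact (exists_span_hom A T hgen _ u v).choose_spec.2
  hom_ext {B} m m' h₀ h₁ := by
    obtain ⟨t, ht₀, ht₁⟩ := exists_span_hom A T hgen (coequalizer m m')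
      (coequalizer.desc (prodFst A T) h₀) (coequalizer.desc (prodSnd A T) h₁)
    have key : coequalizer.π m m' ≫ t ≫ eQ A T = 𝟙 (Tprod A T) := by
      refine eQ_epi A T _ _ ?_
      have hend : (eQ A T ≫ coequalizer.π m m' ≫ t) ≫ eQ A T = eQ A T := by
        refine endo_comp_eQ A T _ ?_ ?_
        · rw [Category.assoc, Category.assoc, ht₀, coequalizer.π_desc, eQ_prodFst]
        · rw [Category.assoc, Category.assoc, ht₁, coequalizer.π_desc, eQ_prodSnd]
      simpa using hend
    calc m = m ≫ 𝟙 _ := (Category.comp_id m).symm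
    _ = m ≫ coequalizer.π m m' ≫ t ≫ eQ A T := by rw [key]
    _ = m' ≫ coequalizer.π m m' ≫ t ≫ eQ A T := by
        rw [← Category.assoc, coequalizer.condition, Category.assoc]
    _ = m' ≫ 𝟙 _ := by rw [key]
    _ = m' := Category.comp_id m'

end Q

end Statement17Aux

section Statement17Key

variable {K : Type u} [Category.{v} K]

lemma htp_refl [HasBinaryCoproducts K] (cyl : Cylinder K) {Z T : K} (g : Z ⟶ T) :
    Htp cyl g g :=
  ⟨cyl.σ.app Z ≫ g, by
    rw [← Category.assoc, cyl.fac]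
    apply coprod.hom_ext
    · exact (coprod.inl_desc_assoc _ _ _).trans ((Category.id_comp g).trans (coprod.inl_desc _ _).symm)
    · exact (coprod.inr_desc_assoc _ _ _).trans ((Category.id_comp g).trans (coprod.inr_desc _ _).symm)⟩

/-- Key lifting lemma: a map with LLP against `Λ^□` admits fillers for relative
homotopies into a fibrant object. -/
lemma key_lift [HasBinaryCoproducts K] [HasPushouts K] [HasTerminal K]
    (cyl : Cylinder K) (S I : MorphismProperty K)
    (Pfun : K ⥤ K) (adj : cyl.C ⊣ Pfun)
    (T : K) (hT : Fibrant cyl S I T) (W : GoodPair T)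
    {X Y : K} (f : X ⟶ Y) (hf : Llp (Rlp (Lambda cyl S I)) f)
    (u v : Y ⟶ T) (H : cyl.C.obj X ⟶ T)
    (hH : cyl.γ.app X ≫ H = coprod.desc (f ≫ u) (f ≫ v)) :
    Htp cyl u v := by
  have ev : ∀ (δ : 𝟭 K ⟶ cyl.C) {B : K} (m : B ⟶ Pfun.obj T),
      m ≫ (δ.app (Pfun.obj T) ≫ adj.counit.app T)
        = δ.app B ≫ ((adj.homEquiv B T).symm m) := by
    intro δ B m
    have h := δ.naturality m
    simp only [Functor.id_map] at h
    rw [Adjunction.homEquiv_counit, ← Category.assoc, h, Category.assoc]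
  obtain ⟨p₀, hp₀⟩ : ∃ p₀ : Pfun.obj T ⟶ T, ∀ {B : K} (m : B ⟶ Pfun.obj T),
      m ≫ p₀ = cyl.γ₀.app B ≫ ((adj.homEquiv B T).symm m) :=
    ⟨cyl.γ₀.app (Pfun.obj T) ≫ adj.counit.app T, fun {B} m => ev cyl.γ₀ m⟩
  obtain ⟨p₁, hp₁⟩ : ∃ p₁ : Pfun.obj T ⟶ T, ∀ {B : K} (m : B ⟶ Pfun.obj T),
      m ≫ p₁ = cyl.γ₁.app B ≫ ((adj.homEquiv B T).symm m) :=
    ⟨cyl.γ₁.app (Pfun.obj T) ≫ adj.counit.app T, fun {B} m => ev cyl.γ₁ m⟩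
  have hρ : Rlp (Lambda cyl S I) (W.lift p₀ p₁) := by
    intro A' B' h hh
    obtain ⟨n, hn⟩ := hh
    constructor
    intro a b sq
    have hstar : Lambda cyl S I (starMap cyl.γ h) := ⟨n + 1, A', B', h, hn, rfl⟩
    haveI : HasLiftingProperty (starMap cyl.γ h) (terminal.from T) := hT _ hstar
    have hcomm : (double K).map h ≫ coprod.desc (b ≫ W.π₀) (b ≫ W.π₁)
        = cyl.γ.app A' ≫ ((adj.homEquiv A' T).symm a) := by
      apply coprod.hom_ext
      · have e2 : cyl.γ₀.app A' ≫ (adj.homEquiv A' T).symm a = a ≫ p₀ :=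
          (hp₀ a).symm
        have e3 : a ≫ p₀ = (a ≫ W.lift p₀ p₁) ≫ W.π₀ := by
          rw [Category.assoc, W.lift_fst]
        have e4 : (a ≫ W.lift p₀ p₁) ≫ W.π₀ = h ≫ b ≫ W.π₀ := by
          rw [sq.w, Category.assoc]
        show coprod.inl ≫ (double K).map h ≫ coprod.desc (b ≫ W.π₀) (b ≫ W.π₁)
          = coprod.inl ≫ cyl.γ.app A' ≫ (adj.homEquiv A' T).symm a
        refine (Category.assoc _ _ _).symm.trans (Eq.trans ?_ (Category.assoc _ _ _))
        have e1 : (coprod.inl ≫ cyl.γ.app A') = cyl.γ₀.app A' := rfl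
        rw [e1, e2, e3, e4]
        simp [double]
        exact congrArg (fun x => h ≫ x) (coprod.inl_desc _ _)
      · have e2 : cyl.γ₁.app A' ≫ (adj.homEquiv A' T).symm a = a ≫ p₁ :=
          (hp₁ a).symm
        have e3 : a ≫ p₁ = (a ≫ W.lift p₀ p₁) ≫ W.π₁ := by
          rw [Category.assoc, W.lift_snd]
        have e4 : (a ≫ W.lift p₀ p₁) ≫ W.π₁ = h ≫ b ≫ W.π₁ := by
          rw [sq.w, Category.assoc]
        show coprod.inr ≫ (double K).map h ≫ coprod.desc (b ≫ W.π₀) (b ≫ W.π₁)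
          = coprod.inr ≫ cyl.γ.app A' ≫ (adj.homEquiv A' T).symm a
        refine (Category.assoc _ _ _).symm.trans (Eq.trans ?_ (Category.assoc _ _ _))
        have e1 : (coprod.inr ≫ cyl.γ.app A') = cyl.γ₁.app A' := rfl
        rw [e1, e2, e3, e4]
        simp [double]
        exact congrArg (fun x => h ≫ x) (coprod.inr_desc _ _)
    have sq2 : CommSq
        (pushout.desc (coprod.desc (b ≫ W.π₀) (b ≫ W.π₁))
          ((adj.homEquiv A' T).symm a) hcomm)
        (starMap cyl.γ h) (terminal.from T) (terminal.from _) :=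
      ⟨terminal.hom_ext _ _⟩
    haveI : sq2.HasLift := this.sq_hasLift sq2
    have eγ : cyl.γ.app B' ≫ sq2.lift
        = coprod.desc (b ≫ W.π₀) (b ≫ W.π₁) := by
      have h1 : pushout.inl ((double K).map h) (cyl.γ.app A') ≫ starMap cyl.γ h
          = cyl.γ.app B' := by exact pushout.inl_desc _ _ _
      rw [← h1, Category.assoc]
      exact (congrArg (fun x => pushout.inl _ _ ≫ x) sq2.fac_left).trans (pushout.inl_desc _ _ _)
    have eC : cyl.C.map h ≫ sq2.lift = (adj.homEquiv A' T).symm a := by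
      have h2 : pushout.inr ((double K).map h) (cyl.γ.app A') ≫ starMap cyl.γ h
          = cyl.C.map h := by exact pushout.inr_desc _ _ _
      rw [← h2, Category.assoc]
      exact (congrArg (fun x => pushout.inr _ _ ≫ x) sq2.fac_left).trans (pushout.inr_desc _ _ _)
    have fl : h ≫ (adj.homEquiv B' T) sq2.lift = a := by
      apply (adj.homEquiv A' T).symm.injective
      rw [Adjunction.homEquiv_naturality_left_symm, Equiv.symm_apply_apply, eC]
    have fr : (adj.homEquiv B' T) sq2.lift ≫ W.lift p₀ p₁ = b := by
      apply W.hom_ext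
      · rw [Category.assoc, W.lift_fst, hp₀, Equiv.symm_apply_apply]
        show (coprod.inl ≫ cyl.γ.app B') ≫ sq2.lift = b ≫ W.π₀
        exact (Category.assoc _ _ _).trans ((congrArg _ eγ).trans (coprod.inl_desc _ _))
      · rw [Category.assoc, W.lift_snd, hp₁, Equiv.symm_apply_apply]
        show (coprod.inr ≫ cyl.γ.app B') ≫ sq2.lift = b ≫ W.π₁
        exact (Category.assoc _ _ _).trans ((congrArg _ eγ).trans (coprod.inr_desc _ _))
    exact ⟨⟨⟨(adj.homEquiv B' T) sq2.lift, fl, fr⟩⟩⟩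
  haveI : HasLiftingProperty f (W.lift p₀ p₁) := hf _ hρ
  have sqw : (adj.homEquiv X T) H ≫ W.lift p₀ p₁ = f ≫ W.lift u v := by
    apply W.hom_ext
    · rw [Category.assoc, Category.assoc, W.lift_fst, W.lift_fst, hp₀,
        Equiv.symm_apply_apply]
      show (coprod.inl ≫ cyl.γ.app X) ≫ H = f ≫ u
      exact (Category.assoc _ _ _).trans ((congrArg _ hH).trans (coprod.inl_desc _ _))
    · rw [Category.assoc, Category.assoc, W.lift_snd, W.lift_snd, hp₁,
        Equiv.symm_apply_apply]
      show (coprod.inr ≫ cyl.γ.app X) ≫ H = f ≫ v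
      exact (Category.assoc _ _ _).trans ((congrArg _ hH).trans (coprod.inr_desc _ _))
  have sq3 : CommSq ((adj.homEquiv X T) H) f (W.lift p₀ p₁) (W.lift u v) := ⟨sqw⟩
  refine ⟨(adj.homEquiv Y T).symm sq3.lift, ?_⟩
  apply coprod.hom_ext
  · refine (Category.assoc _ _ _).symm.trans ?_
    have e6 : (coprod.inl ≫ cyl.γ.app Y) = cyl.γ₀.app Y := rfl
    rw [e6, coprod.inl_desc, ← hp₀]
    have e7 : sq3.lift ≫ W.lift p₀ p₁ ≫ W.π₀ = u := by
      rw [← Category.assoc, sq3.fac_right, W.lift_fst]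
    rw [W.lift_fst] at e7
    exact e7
  · refine (Category.assoc _ _ _).symm.trans ?_
    have e6 : (coprod.inr ≫ cyl.γ.app Y) = cyl.γ₁.app Y := rfl
    rw [e6, coprod.inr_desc, ← hp₁]
    have e7 : sq3.lift ≫ W.lift p₀ p₁ ≫ W.π₁ = v := by
      rw [← Category.assoc, sq3.fac_right, W.lift_snd]
    rw [W.lift_snd] at e7
    exact e7

end Statement17Key

/-- Lemma: `□(Λ^□) ⊆ W(Cyl,S,I)`. -/
theorem statement17 {K : Type u} [Category.{v} K]
    [HasInitial K] [HasTerminal K] [HasBinaryCoproducts K] [HasPushouts K]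
    (hK : IsLocallyPresentable K)
    (Cof : MorphismProperty K) (hwfs : IsWFS Cof (Rlp Cof))
    (I : MorphismProperty K) (hIset : IsSmallClass I)
    (hIL : ∀ ⦃X Y : K⦄ (f : X ⟶ Y), I f → Cof f) (hgen : Cof = Llp (Rlp I))
    (hcof : AllCofibrant Cof)
    (cyl : Cylinder K) (hcyl : cyl.IsCylinderFor Cof) (hcart : cyl.IsCartesian Cof)
    (S : MorphismProperty K) (hS : ∀ ⦃X Y : K⦄ (f : X ⟶ Y), S f → Cof f) :
    ∀ ⦃X Y : K⦄ (f : X ⟶ Y), Llp (Rlp (Lambda cyl S I)) f → Weq cyl S I f := by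
  obtain ⟨⟨κ, hκ⟩, hColim⟩ := hK
  haveI := hColim
  obtain ⟨A, hAsmall, -, hAgen⟩ := hκ.generators
  haveI := hAsmall
  haveI := hcart.leftAdjoint
  intro X Y f hf T hT
  haveI hlift : HasLiftingProperty f (terminal.from T) := hf (terminal.from T) hT
  have surj : ∀ t : X ⟶ T, ∃ w : Y ⟶ T, f ≫ w = t := by
    intro t
    have sqt : CommSq t f (terminal.from T) (terminal.from Y) :=
      ⟨by rw [terminal.comp_from, terminal.comp_from]⟩
    exact ⟨sqt.lift, sqt.fac_left⟩
  have main : ∀ {t t' : X ⟶ T}, HtpEq cyl t t' →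
      ∀ u' v' : Y ⟶ T, f ≫ u' = t → f ≫ v' = t' → HtpEq cyl u' v' := by
    intro t t' hh
    induction hh with
    | base hb =>
      intro u' v' hu hv
      subst hu; subst hv
      obtain ⟨Hmap, hHmap⟩ := hb
      exact STClos.base (key_lift cyl S I cyl.C.rightAdjoint
        (Adjunction.ofIsLeftAdjoint cyl.C) T hT (goodPair A T hAgen) f hf u' v'
        Hmap hHmap)
    | symm _ ih =>
      intro u' v' hu hv
      exact STClos.symm (ih v' u' hv hu)
    | @trans t₁ t₂ t₃ _ _ ih1 ih2 =>
      intro u' v' hu hv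
      obtain ⟨w, hw⟩ := surj t₂
      exact STClos.trans (ih1 u' w hu hw) (ih2 w v' hw hv)
  constructor
  · intro t
    obtain ⟨w, hw⟩ := surj t
    refine ⟨w, ?_⟩
    rw [hw]
    exact STClos.base (htp_refl cyl t)
  · intro u' v' hh
    exact main hh u' v' rfl rfl


end Paper
end
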